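/- Let q be a prime power, let n > 1 be an odd integer dividing q − 1, and let ω be an element of F_{q^n}^× of multiplicative order n·(q−1). Let S := { α ∈ F_{q^n}^× : α^{q−1} has multiplicative order n }, and consider the equivalence relation on S generated by α ∼ c·α for c ∈ F_q^× and α ∼ α⁻¹. Then S = { ω^i : gcd(i, n) = 1 }, and the set { ω^i : 0 < i < n/2 and gcd(i, n) = 1 } contains exactly one element of each equivalence class of S. -/

import Mathlib

open Finset Subgroup

/-- In the unit group of a finite field, any finset `A` of cardinality ≥ d whose elements
satisfy `g ^ d = 1` contains every solution of `x ^ d = 1`. -/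
lemma key_mem {K : Type*} [Field K] [Fintype K] {d : ℕ} (hd : 0 < d) (A : Finset Kˣ)
    (hcard : d ≤ A.card) (hA : ∀ g ∈ A, g ^ d = 1) (x : Kˣ) (hx : x ^ d = 1) : x ∈ A := by
  classical
  have hB : (Finset.univ.filter fun g : Kˣ => g ^ d = 1).card ≤ d := by
    refine le_trans ?_ (Polynomial.card_nthRoots d ((Units.coeHom K) 1))
    exact card_nthRoots_subgroup_units (Units.coeHom K) (fun _ _ h => Units.ext h) hd 1
  have hsub : A ⊆ Finset.univ.filter fun g : Kˣ => g ^ d = 1 := fun g hg =>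
    Finset.mem_filter.2 ⟨Finset.mem_univ _, hA g hg⟩
  have heq := Finset.eq_of_subset_of_card_le hsub (hB.trans hcard)
  rw [heq]
  exact Finset.mem_filter.2 ⟨Finset.mem_univ _, hx⟩

/-- Every solution of `x ^ orderOf w = 1` in a finite field's unit group is a power of `w`. -/
lemma key_pow {K : Type*} [Field K] [Fintype K] (w x : Kˣ) (hx : x ^ orderOf w = 1) :
    ∃ i : ℕ, x = w ^ i := by
  classical
  have hd : 0 < orderOf w := orderOf_pos w
  have hmem : x ∈ (Subgroup.zpowers w : Set Kˣ).toFinset := by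
    refine key_mem hd _ ?_ ?_ x hx
    · have : ((Subgroup.zpowers w : Set Kˣ).toFinset).card = orderOf w := by
        rw [Set.toFinset_card, ← Nat.card_eq_fintype_card]
        exact Nat.card_zpowers w
      omega
    · intro g hg
      have : orderOf g ∣ orderOf w :=
        orderOf_dvd_of_mem_zpowers (by simpa using hg)
      exact orderOf_dvd_iff_pow_eq_one.mp this
  have : x ∈ Subgroup.zpowers w := by simpa using hmem
  have := (IsOfFinOrder.mem_powers_iff_mem_zpowers (by
    exact isOfFinOrder_iff_pow_eq_one.2 ⟨orderOf w, hd, pow_orderOf_eq_one w⟩)).2 this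
  obtain ⟨i, hi⟩ := this
  exact ⟨i, hi.symm⟩

/-- from the proof of Theorem 2.9 of the paper, case `n ∣ q − 1`.
Let `n > 1` be odd dividing `q − 1`, let `ω ∈ F_{q^n}^×` have multiplicative order
`n(q−1)`, and let `S` be the set of `α ∈ F_{q^n}^×` such that `α^{q−1}` has order
`n`.  Consider the equivalence relation on `S` generated by `α ∼ c·α` (`c ∈ F_q^×`)
and `α ∼ α⁻¹`.  Then `S = {ω^i : gcd(i,n) = 1}`, and
`{ω^i : 0 < i < n/2, gcd(i,n) = 1}` contains exactly one element of each class. -/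
theorem stmt_13 (q n : ℕ) (hq : IsPrimePow q) (hodd : Odd n) (hn1 : 1 < n)
    (hdvd : n ∣ q - 1)
    (F K : Type*) [Field F] [Fintype F] (hF : Fintype.card F = q)
    [Field K] [Fintype K] [Algebra F K] (hK : Fintype.card K = q ^ n)
    (ω : K) (hω : orderOf ω = n * (q - 1))
    (S : Set K) (hS : S = {α : K | α ≠ 0 ∧ orderOf (α ^ (q - 1)) = n})
    (rel : K → K → Prop)
    (hrel : rel = fun x y => (∃ c : F, c ≠ 0 ∧ y = algebraMap F K c * x) ∨ y = x⁻¹) :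
    S = {x : K | ∃ i : ℕ, Nat.Coprime i n ∧ x = ω ^ i} ∧
    ∀ α ∈ S, ∃! t : K,
      (∃ i : ℕ, 0 < i ∧ 2 * i < n ∧ Nat.Coprime i n ∧ t = ω ^ i) ∧
      Relation.EqvGen rel α t := by
  classical
  subst hS hrel
  have hq2 : 2 ≤ q := hq.two_le
  have hq1 : 0 < q - 1 := by omega
  have hn0 : 0 < n := by omega
  have hd0 : 0 < n * (q - 1) := Nat.mul_pos hn0 hq1
  have hω0 : ω ≠ 0 := by
    intro h
    have h1 : ω ^ (n * (q - 1)) = 1 := by rw [← hω]; exact pow_orderOf_eq_one ω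
    rw [h, zero_pow hd0.ne'] at h1
    exact zero_ne_one h1
  set wu : Kˣ := Units.mk0 ω hω0 with hwu
  have hwuv : (wu : K) = ω := rfl
  have hwuord : orderOf wu = n * (q - 1) := by
    rw [← orderOf_units, hwuv, hω]
  -- ω ^ (a : ℕ) as a unit zpow
  have hpow_eq : ∀ (a : ℕ) (b : ℤ), (a : ℤ) = b → ω ^ a = ((wu ^ b : Kˣ) : K) := by
    rintro a b rfl
    rw [zpow_natCast, Units.val_pow_eq_pow_val, hwuv]
  ------------------------------------------------------------------ Part 1
  have hpart1 : {α : K | α ≠ 0 ∧ orderOf (α ^ (q - 1)) = n}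
      = {x : K | ∃ i : ℕ, Nat.Coprime i n ∧ x = ω ^ i} := by
    ext x
    simp only [Set.mem_setOf_eq]
    constructor
    · rintro ⟨hx0, hxord⟩
      have hx1 : x ^ (n * (q - 1)) = 1 := by
        have h2 : (x ^ (q - 1)) ^ n = 1 := by rw [← hxord]; exact pow_orderOf_eq_one _
        rw [← pow_mul, mul_comm] at h2; exact h2
      set xu : Kˣ := Units.mk0 x hx0 with hxu
      have hxu1 : xu ^ orderOf wu = 1 := by
        apply Units.ext
        rw [Units.val_pow_eq_pow_val, hwuord, Units.val_one]
        exact hx1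
      obtain ⟨i, hi⟩ := key_pow wu xu hxu1
      have hxw : x = ω ^ i := by
        have h3 := congrArg (Units.val) hi
        rwa [Units.val_pow_eq_pow_val, hwuv] at h3
      rcases Nat.eq_zero_or_pos i with hi0 | hi0
      · exfalso
        rw [hi0, pow_zero] at hxw
        rw [hxw, one_pow, orderOf_one] at hxord
        omega
      refine ⟨i, ?_, hxw⟩
      rw [hxw, ← pow_mul] at hxord
      rw [orderOf_pow' ω (Nat.mul_ne_zero hi0.ne' hq1.ne'), hω, Nat.gcd_mul_right] at hxord
      rw [Nat.mul_div_mul_right _ _ hq1] at hxord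
      have hg : Nat.gcd n i ∣ n := Nat.gcd_dvd_left _ _
      have hgn : Nat.gcd n i * (n / Nat.gcd n i) = n := Nat.mul_div_cancel' hg
      rw [hxord] at hgn
      have : Nat.gcd n i = 1 := Nat.eq_of_mul_eq_mul_right hn0 (by rw [hgn, one_mul])
      rwa [Nat.Coprime, Nat.gcd_comm]
    · rintro ⟨i, hco, rfl⟩
      have hi0 : i ≠ 0 := by
        rintro rfl
        rw [Nat.coprime_zero_left] at hco
        omega
      refine ⟨pow_ne_zero _ hω0, ?_⟩
      rw [← pow_mul, orderOf_pow' ω (Nat.mul_ne_zero hi0 hq1.ne'), hω, Nat.gcd_mul_right]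
      have h4 : Nat.gcd n i = 1 := (Nat.coprime_comm.mp hco)
      rw [h4, one_mul, Nat.mul_div_cancel _ hq1]
  ------------------------------------------------------------------ F-image facts
  have hFpow : ∀ f : F, f ≠ 0 → (algebraMap F K f) ^ (q - 1) = 1 := by
    intro f hf
    have h5 := FiniteField.pow_card_sub_one_eq_one f hf
    rw [hF] at h5
    rw [← map_pow, h5, map_one]
  have hFmem : ∀ x : K, x ≠ 0 → x ^ (q - 1) = 1 → ∃ f : F, f ≠ 0 ∧ algebraMap F K f = x := by
    intro x hx0 hx1
    set A : Finset Kˣ :=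
      Finset.image (fun f : Fˣ => Units.map (algebraMap F K).toMonoidHom f) Finset.univ with hA
    have hinj : Function.Injective (Units.map (algebraMap F K).toMonoidHom) :=
      Units.map_injective (algebraMap F K).injective
    have hcard : q - 1 ≤ A.card := by
      rw [hA, Finset.card_image_of_injective _ hinj, Finset.card_univ, Fintype.card_units, hF]
    have hAone : ∀ g ∈ A, g ^ (q - 1) = 1 := by
      intro g hg
      rw [hA, Finset.mem_image] at hg
      obtain ⟨f, -, rfl⟩ := hg
      apply Units.ext
      rw [Units.val_pow_eq_pow_val, Units.coe_map, Units.val_one]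
      exact hFpow f.val f.ne_zero
    set xu : Kˣ := Units.mk0 x hx0 with hxu
    have hxmem : xu ∈ A := by
      refine key_mem hq1 A hcard hAone xu ?_
      apply Units.ext
      rw [Units.val_pow_eq_pow_val, Units.val_one]
      exact hx1
    rw [hA, Finset.mem_image] at hxmem
    obtain ⟨f, -, hf⟩ := hxmem
    refine ⟨f.val, f.ne_zero, ?_⟩
    have := congrArg Units.val hf
    rwa [Units.coe_map] at this
  -- powers of wu^n come from F
  have hωn : ∀ k : ℤ, ∃ f : F, f ≠ 0 ∧ algebraMap F K f = ((wu ^ ((n : ℤ) * k) : Kˣ) : K) := by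
    intro k
    have hu1 : (wu ^ ((n : ℤ) * k)) ^ (q - 1) = 1 := by
      rw [← zpow_natCast (wu ^ ((n : ℤ) * k)), ← zpow_mul]
      have he : (n : ℤ) * k * (q - 1 : ℕ) = ((n * (q - 1) : ℕ) : ℤ) * k := by push_cast; ring
      rw [he, zpow_mul, zpow_natCast, ← hwuord, pow_orderOf_eq_one, one_zpow]
    refine hFmem _ (Units.ne_zero _) ?_
    rw [← Units.val_pow_eq_pow_val, hu1, Units.val_one]
  -- elements of F give powers of wu^n
  have hc_pow : ∀ f : F, f ≠ 0 → ∃ m : ℕ, algebraMap F K f = ((wu ^ ((n : ℤ) * m) : Kˣ) : K) := by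
    intro f hf
    have hcne : algebraMap F K f ≠ 0 := fun h => hf ((map_eq_zero _).mp h)
    set cu : Kˣ := Units.mk0 (algebraMap F K f) hcne with hcu
    have hordn : orderOf (wu ^ n) = q - 1 := by
      rw [orderOf_pow' wu hn0.ne', hwuord, Nat.gcd_eq_right ⟨q - 1, rfl⟩,
        Nat.mul_div_cancel_left _ hn0]
    have hcu1 : cu ^ orderOf (wu ^ n) = 1 := by
      rw [hordn]
      apply Units.ext
      rw [Units.val_pow_eq_pow_val, Units.val_one]
      exact hFpow f hf
    obtain ⟨m, hm⟩ := key_pow (wu ^ n) cu hcu1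
    refine ⟨m, ?_⟩
    calc (algebraMap F K) f = (((wu ^ n) ^ m : Kˣ) : K) := congrArg Units.val hm
      _ = ((wu ^ ((n : ℤ) * m) : Kˣ) : K) := by
          congr 1
          rw [← pow_mul, ← zpow_natCast]
          congr 1
  ------------------------------------------------------------------ the invariant
  set rel : K → K → Prop :=
    fun x y => (∃ c : F, c ≠ 0 ∧ y = algebraMap F K c * x) ∨ y = x⁻¹ with hrel
  set P : ℤ → K → Prop := fun j t => ∃ k : ℤ,
      t = ((wu ^ (j + n * k) : Kˣ) : K) ∨ t = ((wu ^ (-j + n * k) : Kˣ) : K) with hP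
  have hsymrel : ∀ x y, rel x y → rel y x := by
    rintro x y (⟨c, hc, rfl⟩ | rfl)
    · left
      refine ⟨c⁻¹, inv_ne_zero hc, ?_⟩
      rw [map_inv₀, ← mul_assoc, inv_mul_cancel₀ (fun h => hc ((map_eq_zero _).mp h)), one_mul]
    · right; rw [inv_inv]
  have hstep : ∀ (j : ℤ) (x y : K), rel x y → P j x → P j y := by
    rintro j x y (⟨c, hc, rfl⟩ | rfl) ⟨k, hk | hk⟩
    · obtain ⟨m, hm⟩ := hc_pow c hc
      refine ⟨k + m, Or.inl ?_⟩
      rw [hm, hk, ← Units.val_mul, ← zpow_add]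
      congr 2
      ring
    · obtain ⟨m, hm⟩ := hc_pow c hc
      refine ⟨k + m, Or.inr ?_⟩
      rw [hm, hk, ← Units.val_mul, ← zpow_add]
      congr 2
      ring
    · refine ⟨-k, Or.inr ?_⟩
      rw [hk, ← Units.val_inv_eq_inv_val, ← zpow_neg]
      congr 2
      ring
    · refine ⟨-k, Or.inl ?_⟩
      rw [hk, ← Units.val_inv_eq_inv_val, ← zpow_neg]
      congr 2
      ring
  have heqv : ∀ (j : ℤ) (x y : K), Relation.EqvGen rel x y → (P j x ↔ P j y) := by
    intro j x y h
    induction h with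
    | rel a b hab => exact ⟨hstep j a b hab, hstep j b a (hsymrel a b hab)⟩
    | refl a => exact Iff.rfl
    | symm a b _ ih => exact ih.symm
    | trans a b c _ _ ih1 ih2 => exact ih1.trans ih2
  have hclass : ∀ (j : ℤ) (t : K),
      Relation.EqvGen rel ((wu ^ j : Kˣ) : K) t ↔ P j t := by
    intro j t
    constructor
    · intro h
      exact (heqv j _ t h).mp ⟨0, Or.inl (by rw [mul_zero, add_zero])⟩
    · rintro ⟨k, hk | hk⟩
      · apply Relation.EqvGen.rel
        left
        obtain ⟨f, hf, hfm⟩ := hωn k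
        refine ⟨f, hf, ?_⟩
        rw [hfm, hk, ← Units.val_mul, ← zpow_add]
        congr 2
        ring
      · refine Relation.EqvGen.trans _ _ _
          (Relation.EqvGen.rel _ _ (Or.inr rfl)) (Relation.EqvGen.rel _ _ (Or.inl ?_))
        obtain ⟨f, hf, hfm⟩ := hωn k
        refine ⟨f, hf, ?_⟩
        rw [hfm, ← Units.val_inv_eq_inv_val, ← zpow_neg, ← Units.val_mul, ← zpow_add, hk]
        congr 2
        ring
  ------------------------------------------------------------------ Part 2
  refine ⟨hpart1, ?_⟩
  intro α hα
  rw [hpart1] at hα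
  obtain ⟨i0, hco, rfl⟩ := hα
  have hαu : ω ^ i0 = ((wu ^ (i0 : ℤ) : Kˣ) : K) := hpow_eq i0 _ rfl
  set r : ℕ := i0 % n with hr
  have hrn : r < n := Nat.mod_lt _ hn0
  have hdm : n * (i0 / n) + i0 % n = i0 := Nat.div_add_mod i0 n
  have hcr : Nat.Coprime r n := by
    have h6 : Nat.gcd n i0 = Nat.gcd r n := Nat.gcd_rec n i0
    have h7 : Nat.gcd n i0 = 1 := Nat.coprime_comm.mp hco
    rw [Nat.Coprime, ← h6, h7]
  have hr0 : 0 < r := by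
    rcases Nat.eq_zero_or_pos r with h | h
    · exfalso; rw [h] at hcr; rw [Nat.coprime_zero_left] at hcr; omega
    · exact h
  have h2rn : 2 * r ≠ n := by
    intro h
    obtain ⟨m, hm⟩ := hodd
    omega
  -- the representative exponent
  set i : ℕ := if 2 * r < n then r else n - r with hi
  have hipos : 0 < i := by rw [hi]; split <;> omega
  have hilt : 2 * i < n := by rw [hi]; split <;> omega
  have hico : Nat.Coprime i n := by
    rw [hi]; split
    · exact hcr
    · have h8 : Nat.gcd (n - r) n ∣ r := by
        have h9 : Nat.gcd (n - r) n ∣ n - (n - r) :=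
          Nat.dvd_sub (Nat.gcd_dvd_right _ _) (Nat.gcd_dvd_left _ _)
        rwa [Nat.sub_sub_self hrn.le] at h9
      have h10 : Nat.gcd (n - r) n ∣ Nat.gcd r n := Nat.dvd_gcd h8 (Nat.gcd_dvd_right _ _)
      rw [Nat.Coprime] at hcr ⊢
      rw [hcr] at h10
      exact Nat.dvd_one.mp h10
  have hdmz : (i0 : ℤ) = (n : ℤ) * ((i0 / n : ℕ) : ℤ) + ((i0 % n : ℕ) : ℤ) := by
    exact_mod_cast hdm.symm
  have hrz : ((r : ℕ) : ℤ) = ((i0 % n : ℕ) : ℤ) := by rw [hr]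
  have hkrep : ∃ k : ℤ, (i : ℤ) = (i0 : ℤ) + n * k ∨ (i : ℤ) = -(i0 : ℤ) + n * k := by
    rw [hi]
    split
    · exact ⟨-((i0 / n : ℕ) : ℤ), Or.inl (by rw [mul_neg]; linarith [hdmz, hrz])⟩
    · refine ⟨((i0 / n : ℕ) : ℤ) + 1, Or.inr ?_⟩
      rw [Nat.cast_sub hrn.le]
      linarith [hdmz, hrz]
  obtain ⟨k, hk⟩ := hkrep
  have hPi : P (i0 : ℤ) (ω ^ i) := by
    rcases hk with hk | hk
    · exact ⟨k, Or.inl (hpow_eq i _ hk)⟩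
    · exact ⟨k, Or.inr (hpow_eq i _ hk)⟩
  -- congruence extraction
  have hmod : ∀ (a : ℕ) (e : ℤ), ω ^ a = ((wu ^ e : Kˣ) : K) → (a : ℤ) ≡ e [ZMOD (n : ℤ)] := by
    intro a e ha
    have hu : wu ^ (a : ℤ) = wu ^ e := by
      apply Units.ext
      rw [← hpow_eq a _ rfl, ha]
    have h11 := zpow_eq_zpow_iff_modEq.mp hu
    rw [hwuord] at h11
    refine Int.ModEq.of_dvd ⟨(q - 1 : ℕ), by push_cast; ring⟩ h11
  refine ⟨ω ^ i, ⟨⟨i, hipos, hilt, hico, rfl⟩, ?_⟩, ?_⟩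
  · rw [hαu]
    exact (hclass (i0 : ℤ) (ω ^ i)).mpr hPi
  · rintro t' ⟨⟨i', hi'pos, hi'lt, hi'co, rfl⟩, ht'⟩
    rw [hαu] at ht'
    obtain ⟨k', hk'⟩ := (hclass (i0 : ℤ) (ω ^ i')).mp ht'
    -- congruences mod n
    have hmi : (i : ℤ) ≡ (i0 : ℤ) [ZMOD (n : ℤ)] ∨ (i : ℤ) ≡ -(i0 : ℤ) [ZMOD (n : ℤ)] := by
      rcases hk with hk | hk
      · exact Or.inl (by rw [hk]; exact Int.modEq_iff_dvd.mpr ⟨-k, by ring⟩)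
      · exact Or.inr (by rw [hk]; exact Int.modEq_iff_dvd.mpr ⟨-k, by ring⟩)
    have hmi' : (i' : ℤ) ≡ (i0 : ℤ) [ZMOD (n : ℤ)] ∨ (i' : ℤ) ≡ -(i0 : ℤ) [ZMOD (n : ℤ)] := by
      rcases hk' with hk' | hk'
      · exact Or.inl ((hmod i' _ hk').trans (Int.modEq_iff_dvd.mpr ⟨k', by ring⟩).symm)
      · exact Or.inr ((hmod i' _ hk').trans (Int.modEq_iff_dvd.mpr ⟨k', by ring⟩).symm)
    -- combine
    have hii' : (n : ℤ) ∣ ((i : ℤ) - (i' : ℤ)) ∨ (n : ℤ) ∣ ((i : ℤ) + (i' : ℤ)) := by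
      rcases hmi with h | h <;> rcases hmi' with h' | h'
      · exact Or.inl ((h.trans h'.symm).symm.dvd)
      · refine Or.inr ?_
        obtain ⟨c, hc⟩ := (h.add h').dvd
        exact ⟨-c, by rw [Int.mul_neg, ← hc]; ring⟩
      · refine Or.inr ?_
        obtain ⟨c, hc⟩ := (h.add h').dvd
        exact ⟨-c, by rw [Int.mul_neg, ← hc]; ring⟩
      · exact Or.inl ((h.trans h'.symm).symm.dvd)
    have hieq : i' = i := by
      rcases hii' with h | h
      · have h12 : (i : ℤ) - (i' : ℤ) = 0 := by
          refine Int.eq_zero_of_abs_lt_dvd h ?_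
          rw [abs_lt]
          constructor <;> push_cast <;> omega
        omega
      · exfalso
        have h13 : (n : ℤ) ∣ ((i + i' : ℕ) : ℤ) := by push_cast; exact_mod_cast h
        rw [Int.natCast_dvd_natCast] at h13
        have := Nat.le_of_dvd (by omega) h13
        omega
    rw [hieq]
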